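/- Let 𝒳 and 𝒴 be finite alphabets and let δ > 0. For every η > 0 there exists ε₀ > 0 such that for all 0 < ε < ε₀ and every joint pmf P_{X,Y} on 𝒳×𝒴 whose marginals satisfy P_X(x) ≥ δ and P_Y(y) ≥ δ for all x,y, and which satisfies Σ_{x,y} (P_{X,Y}(x,y) − P_X(x)P_Y(y))²/(P_X(x)P_Y(y)) ≤ ε², the mutual information I(X;Y) := Σ_{x,y} P_{X,Y}(x,y)·log(P_{X,Y}(x,y)/(P_X(x)P_Y(y))) satisfies |I(X;Y) − (1/2)·‖B̃‖_F²| ≤ η·ε², where (1/2)·‖B̃‖_F² = (1/2)·Σ_i σ_i(B̃)² = (1/2)·Σ_{x,y}(P_{X,Y}(x,y) − P_X(x)P_Y(y))²/(P_X(x)P_Y(y)). -/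

import Mathlib

lemma log_quad (t : ℝ) (ht : |t| ≤ 1/2) :
    |(1+t) * Real.log (1+t) - t - t^2/2| ≤ 4 * |t|^3 := by
  have h1 : |(-t)| < 1 := by rw [abs_neg]; linarith [abs_nonneg t, ht]
  have key := Real.abs_log_sub_add_sum_range_le h1 2
  simp [Finset.sum_range_succ] at key
  set r := Real.log (1+t) - t + t^2/2 with hr
  have hkey : |r| ≤ |t|^3 / (1 - |t|) := by
    convert key using 2
    ring
  have h2 : |t|^3 / (1 - |t|) ≤ 2 * |t|^3 := by
    rw [div_le_iff₀ (by linarith [abs_nonneg t])]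
    nlinarith [abs_nonneg t, pow_nonneg (abs_nonneg t) 3]
  have hrb : |r| ≤ 2 * |t|^3 := hkey.trans h2
  have heq : (1+t) * Real.log (1+t) - t - t^2/2 = (1+t)*r - t^3/2 := by
    rw [hr]; ring
  rw [heq]
  have habs : |(1+t)*r - t^3/2| ≤ |1+t| * |r| + |t|^3/2 := by
    calc |(1+t)*r - t^3/2| ≤ |(1+t)*r| + |t^3/2| := abs_sub _ _
    _ = |1+t| * |r| + |t|^3/2 := by rw [abs_mul, abs_div]; simp [abs_pow]
  have h1t : |1+t| ≤ 3/2 := by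
    rcases abs_le.1 ht with ⟨hl, hu⟩
    rw [abs_le]; constructor <;> linarith
  nlinarith [abs_nonneg r, pow_nonneg (abs_nonneg t) 3, abs_nonneg (1+t)]

lemma ptwise (p q : ℝ) (hq : 0 < q) (h : |p - q| ≤ q/2) :
    |p * Real.log (p/q) - (p-q) - (p-q)^2/(2*q)| ≤ 4 * |p-q|^3 / q^2 := by
  set t := (p-q)/q with ht
  have hqne : q ≠ 0 := hq.ne'
  have hpt : p = q*(1+t) := by rw [ht, mul_add, mul_div_cancel₀ (p - q) hqne]; ring
  have habs : |t| ≤ 1/2 := by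
    rw [ht, abs_div, abs_of_pos hq, div_le_iff₀ hq]
    linarith
  have hdiv : p / q = 1 + t := by rw [hpt]; field_simp
  have hpq : p - q = q * t := by rw [ht]; field_simp
  have hlq := log_quad t habs
  have heq : p * Real.log (p/q) - (p-q) - (p-q)^2/(2*q) =
      q * ((1+t) * Real.log (1+t) - t - t^2/2) := by
    rw [hdiv, hpt]; field_simp; ring
  have heq2 : 4 * |p-q|^3 / q^2 = q * (4 * |t|^3) := by
    rw [hpq, abs_mul, abs_of_pos hq, mul_pow]
    field_simp
  rw [heq, heq2, abs_mul, abs_of_pos hq]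
  exact mul_le_mul_of_nonneg_left hlq hq.le

theorem stmt_8 {X Y : Type*} [Fintype X] [Fintype Y] (δ : ℝ) (hδ : 0 < δ) :
    ∀ η > 0, ∃ ε₀ > 0, ∀ ε : ℝ, 0 < ε → ε < ε₀ →
      ∀ P : X → Y → ℝ,
        (∀ x y, 0 ≤ P x y) → (∑ x, ∑ y, P x y = 1) →
        (∀ x, δ ≤ ∑ y, P x y) → (∀ y, δ ≤ ∑ x, P x y) →
        (∑ x, ∑ y, (P x y - (∑ y', P x y') * (∑ x', P x' y)) ^ 2 /
            ((∑ y', P x y') * (∑ x', P x' y)) ≤ ε ^ 2) →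
        |(∑ x, ∑ y, P x y * Real.log (P x y / ((∑ y', P x y') * (∑ x', P x' y)))) -
            (1 / 2) * ∑ x, ∑ y, (P x y - (∑ y', P x y') * (∑ x', P x' y)) ^ 2 /
              ((∑ y', P x y') * (∑ x', P x' y))| ≤ η * ε ^ 2 := by
  intro η hη
  refine ⟨min (δ/2) (η*δ/4), by positivity, ?_⟩
  intro ε hε hεlt P hP hsum hmx hmy hchi
  have hε1 : ε ≤ δ/2 := (le_of_lt (lt_of_lt_of_le hεlt (min_le_left _ _)))
  have hε2 : ε ≤ η*δ/4 := (le_of_lt (lt_of_lt_of_le hεlt (min_le_right _ _)))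
  set Q : X → Y → ℝ := fun x y => (∑ y', P x y') * (∑ x', P x' y) with hQdef
  have hQlb : ∀ x y, δ^2 ≤ Q x y := by
    intro x y
    simp only [hQdef]
    rw [sq]
    exact mul_le_mul (hmx x) (hmy y) hδ.le (hδ.le.trans (hmx x))
  have hQpos : ∀ x y, 0 < Q x y := fun x y => lt_of_lt_of_le (by positivity) (hQlb x y)
  have hnn : ∀ x y, 0 ≤ (P x y - Q x y)^2 / Q x y := fun x y =>
    div_nonneg (sq_nonneg _) (hQpos x y).le
  have hterm : ∀ x y, (P x y - Q x y)^2 / Q x y ≤ ε^2 := by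
    intro x y
    refine le_trans ?_ hchi
    calc (P x y - Q x y)^2 / Q x y ≤ ∑ y', (P x y' - Q x y')^2 / Q x y' :=
          Finset.single_le_sum (fun y' _ => hnn x y') (Finset.mem_univ y)
      _ ≤ ∑ x', ∑ y', (P x' y' - Q x' y')^2 / Q x' y' :=
          Finset.single_le_sum (fun x' _ => Finset.sum_nonneg fun y' _ => hnn x' y')
            (Finset.mem_univ x)
  have hsq : ∀ x y, (P x y - Q x y)^2 ≤ ε^2 * Q x y := by
    intro x y
    have h := hterm x y
    rw [div_le_iff₀ (hQpos x y)] at h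
    exact h
  have hsmall : ∀ x y, |P x y - Q x y| ≤ Q x y / 2 := by
    intro x y
    have h1 := hsq x y
    have h2 := hQlb x y
    have h3 := hQpos x y
    have hee : ε^2 ≤ δ^2/4 := by nlinarith
    have hkey : (P x y - Q x y)^2 ≤ (Q x y / 2)^2 := by
      nlinarith [mul_le_mul_of_nonneg_right hee h3.le,
        mul_le_mul_of_nonneg_left h2 (by positivity : (0:ℝ) ≤ δ^2/4)]
    have habs := sq_abs (P x y - Q x y)
    nlinarith [abs_nonneg (P x y - Q x y)]
  have hratio : ∀ x y, |P x y - Q x y| ≤ (ε/δ) * Q x y := by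
    intro x y
    have h1 := hsq x y
    have h2 := hQlb x y
    have h3 := hQpos x y
    have hkey : (P x y - Q x y)^2 * δ^2 ≤ (ε * Q x y)^2 := by
      nlinarith [mul_le_mul_of_nonneg_right h1 (sq_nonneg δ),
        mul_le_mul_of_nonneg_left h2 (mul_nonneg (sq_nonneg ε) h3.le)]
    have habs := sq_abs (P x y - Q x y)
    have hstep : |P x y - Q x y| * δ ≤ ε * Q x y := by
      nlinarith [abs_nonneg (P x y - Q x y), mul_pos hε h3]
    rw [div_mul_eq_mul_div, le_div_iff₀ hδ]
    linarith
  have hbd : ∀ x y, |P x y * Real.log (P x y / Q x y) - (P x y - Q x y)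
        - (P x y - Q x y)^2/(2 * Q x y)|
      ≤ (4*ε/δ) * ((P x y - Q x y)^2 / Q x y) := by
    intro x y
    refine (ptwise (P x y) (Q x y) (hQpos x y) (hsmall x y)).trans ?_
    have h1 := hratio x y
    have h3 := hQpos x y
    have habs := sq_abs (P x y - Q x y)
    have hcube : |P x y - Q x y|^3 = |P x y - Q x y| * (P x y - Q x y)^2 := by
      rw [← habs]; ring
    rw [hcube, div_le_iff₀ (by positivity : (0:ℝ) < Q x y ^ 2)]
    have heq : (4*ε/δ) * ((P x y - Q x y)^2 / Q x y) * Q x y ^2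
        = ((ε/δ) * Q x y) * (4 * (P x y - Q x y)^2) := by
      field_simp
    rw [heq]
    nlinarith [sq_nonneg (P x y - Q x y), abs_nonneg (P x y - Q x y)]
  have hPY : ∑ y, ∑ x', P x' y = 1 := by rw [Finset.sum_comm]; exact hsum
  have hQsum : ∑ x, ∑ y, Q x y = 1 := by
    simp only [hQdef]
    rw [← Finset.sum_mul_sum, hsum, hPY]
    norm_num
  have hgsum : ∑ x, ∑ y, (P x y - Q x y)^2/(2*Q x y)
      = (1/2) * ∑ x, ∑ y, (P x y - Q x y)^2 / Q x y := by
    simp only [Finset.mul_sum]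
    refine Finset.sum_congr rfl fun x _ => Finset.sum_congr rfl fun y _ => by ring
  have hrw : (∑ x, ∑ y, P x y * Real.log (P x y / Q x y))
      - (1/2) * ∑ x, ∑ y, (P x y - Q x y)^2 / Q x y
      = ∑ x, ∑ y, (P x y * Real.log (P x y / Q x y) - (P x y - Q x y)
          - (P x y - Q x y)^2/(2 * Q x y)) := by
    simp only [Finset.sum_sub_distrib]
    rw [hsum, hQsum, hgsum]
    ring
  rw [hrw]
  calc |∑ x, ∑ y, (P x y * Real.log (P x y / Q x y) - (P x y - Q x y)
          - (P x y - Q x y)^2/(2 * Q x y))|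
      ≤ ∑ x, ∑ y, |P x y * Real.log (P x y / Q x y) - (P x y - Q x y)
          - (P x y - Q x y)^2/(2 * Q x y)| := by
        refine (Finset.abs_sum_le_sum_abs _ _).trans ?_
        exact Finset.sum_le_sum fun x _ => Finset.abs_sum_le_sum_abs _ _
    _ ≤ ∑ x, ∑ y, (4*ε/δ) * ((P x y - Q x y)^2 / Q x y) :=
        Finset.sum_le_sum fun x _ => Finset.sum_le_sum fun y _ => hbd x y
    _ = (4*ε/δ) * ∑ x, ∑ y, (P x y - Q x y)^2 / Q x y := by
        simp only [Finset.mul_sum]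
    _ ≤ (4*ε/δ) * ε^2 := mul_le_mul_of_nonneg_left hchi (by positivity)
    _ ≤ η * ε^2 := by
        have : 4*ε/δ ≤ η := by rw [div_le_iff₀ hδ]; linarith
        nlinarith [sq_nonneg ε]
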